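/- Let R = ({q₀}, {q₁}, T) be a two-dimensional robot game with transitions T ⊆ Q × [−V; V]² × Q (Q = {q₀, q₁}, V ∈ ℕ) and initial configuration (q₀, (x₀, y₀)) ∈ Q × ℤ². Let G be the 3-dimensional weighted game with P₀-states {q_init, q₀, q_stop}, P₁-state {q₁}, and edges: (q, (a, b, −a−b), q') for each (q, (a, b), q') ∈ T; (q₀, (−1, −1, −1), q_stop); (q_stop, (0, 0, 0), q_stop); and (q_init, (x₀+1, y₀+1, −x₀−y₀+1), q₀). Then P₀ has a winning strategy in G from q_init for the multi-dimensional average-energy objective AE((0,0,0)) if, and only if, P₀ wins the robot game R from (q₀, (x₀, y₀)). -/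

import Mathlib

namespace RobotReduction

/-- An edge with a weight in `β` over a state space `α`. -/
abbrev VEdge (α β : Type*) : Type _ := α × β × α

variable {α β : Type*}

/-- A play from `s`: an infinite sequence of consecutive edges of `E` starting at `s`. -/
def IsPlay (E : Set (VEdge α β)) (s : α) (π : ℕ → VEdge α β) : Prop :=
  (∀ i, π i ∈ E) ∧ (π 0).1 = s ∧ ∀ i, (π i).2.2 = (π (i + 1)).1

/-- The state reached after following the finite prefix `ρ` from `s`. -/
def EndSt (s : α) (ρ : List (VEdge α β)) : α :=
  (ρ.getLast?.map (fun e => e.2.2)).getD s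

/-- `ρ` is a finite play prefix from `s` in the graph with edge set `E`. -/
def IsPrefixFrom (E : Set (VEdge α β)) (s : α) (ρ : List (VEdge α β)) : Prop :=
  (∀ e ∈ ρ, e ∈ E) ∧ List.Chain' (fun e f => e.2.2 = f.1) ρ ∧
    ∀ e, ρ.head? = some e → e.1 = s

/-- A strategy (of the player owning the states in `S0`) from `s`. -/
def IsStrategy (E : Set (VEdge α β)) (S0 : Set α) (s : α)
    (σ : List (VEdge α β) → VEdge α β) : Prop :=
  ∀ ρ, IsPrefixFrom E s ρ → EndSt s ρ ∈ S0 → σ ρ ∈ E ∧ (σ ρ).1 = EndSt s ρ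

/-- The length-`n` prefix of a play, as a list of edges. -/
def Pref (π : ℕ → VEdge α β) (n : ℕ) : List (VEdge α β) :=
  List.ofFn (fun i : Fin n => π i)

/-- `π` is an outcome of the strategy `σ` (for the player owning `S0`) from `s`. -/
def IsOutcome (E : Set (VEdge α β)) (S0 : Set α) (s : α)
    (σ : List (VEdge α β) → VEdge α β) (π : ℕ → VEdge α β) : Prop :=
  IsPlay E s π ∧ ∀ n, EndSt s (Pref π n) ∈ S0 → π n = σ (Pref π n)

/-- The state visited at position `n` along a play from `s`. -/
def StAt (s : α) (π : ℕ → VEdge α β) : ℕ → α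
  | 0 => s
  | n + 1 => (π n).2.2

/-- Energy level, in one coordinate `w`, of the length-`n` prefix of `π`. -/
def ELc (w : VEdge α β → ℤ) (π : ℕ → VEdge α β) (n : ℕ) : ℤ :=
  ∑ i ∈ Finset.range n, w (π i)

/-- Average-energy, in one coordinate `w`, of the length-`n` prefix of `π`. -/
def AEc (w : VEdge α β → ℤ) (π : ℕ → VEdge α β) (n : ℕ) : ℚ :=
  (∑ i ∈ Finset.range n, (ELc w π (i + 1) : ℚ)) / (n : ℚ)

/-- `limsup_{n → ∞} f n ≤ t` (ε-characterization, valid in `ℚ`). -/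
def LimsupLE (f : ℕ → ℚ) (t : ℚ) : Prop :=
  ∀ ε : ℚ, 0 < ε → ∃ N, ∀ n ≥ N, f n ≤ t + ε

/-- The two states of a robot game: `q₀` belongs to `P₀`, `q₁` to `P₁`. -/
inductive RQ
  | q0 | q1
deriving DecidableEq

/-- The states of the constructed 3-dimensional game:
`q_init`, `q₀`, `q_stop` belong to `P₀` and `q₁` to `P₁`. -/
inductive GS
  | qinit | q0 | q1 | qstop
deriving DecidableEq

/-- Embedding of the robot-game states into the constructed game. -/
def emb : RQ → GS
  | RQ.q0 => GS.q0
  | RQ.q1 => GS.q1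

/-- The edges of the constructed 3-dimensional game `G`:
`(q, (a, b, −a−b), q')` for each robot transition `(q, (a,b), q')`;
`(q₀, (−1,−1,−1), q_stop)`; `(q_stop, (0,0,0), q_stop)`; and
`(q_init, (x₀+1, y₀+1, −x₀−y₀+1), q₀)`. -/
def GE (T : Set (VEdge RQ (ℤ × ℤ))) (x₀ y₀ : ℤ) : Set (VEdge GS (ℤ × ℤ × ℤ)) :=
  {e | (∃ (q : RQ) (a b : ℤ) (q' : RQ), (q, (a, b), q') ∈ T ∧
          e = (emb q, (a, b, -a - b), emb q')) ∨
       e = (GS.q0, (-1, -1, -1), GS.qstop) ∨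
       e = (GS.qstop, (0, 0, 0), GS.qstop) ∨
       e = (GS.qinit, (x₀ + 1, y₀ + 1, -x₀ - y₀ + 1), GS.q0)}

/-- `P₀` wins the robot game `R = ({q₀}, {q₁}, T)` from `(q₀, (x₀, y₀))`: he has a
strategy all of whose outcomes eventually reach the configuration `(q₀, (0, 0))`. -/
def RobotWin (T : Set (VEdge RQ (ℤ × ℤ))) (x₀ y₀ : ℤ) : Prop :=
  ∃ σ, IsStrategy T {RQ.q0} RQ.q0 σ ∧
    ∀ π, IsOutcome T {RQ.q0} RQ.q0 σ π →
      ∃ n, StAt RQ.q0 π n = RQ.q0 ∧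
        x₀ + ∑ i ∈ Finset.range n, (π i).2.1.1 = 0 ∧
        y₀ + ∑ i ∈ Finset.range n, (π i).2.1.2 = 0

/-- `P₀` wins the constructed game `G` from `q_init` for the 3-dimensional
average-energy objective `AE((0,0,0))` (componentwise `AEsup ≤ 0`). -/
def GWin (T : Set (VEdge RQ (ℤ × ℤ))) (x₀ y₀ : ℤ) : Prop :=
  ∃ σ, IsStrategy (GE T x₀ y₀) {GS.qinit, GS.q0, GS.qstop} GS.qinit σ ∧
    ∀ π, IsOutcome (GE T x₀ y₀) {GS.qinit, GS.q0, GS.qstop} GS.qinit σ π →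
      LimsupLE (AEc (fun e => e.2.1.1) π) 0 ∧
      LimsupLE (AEc (fun e => e.2.1.2.1) π) 0 ∧
      LimsupLE (AEc (fun e => e.2.1.2.2) π) 0

-- ### generic helpers

lemma endSt_nil (s : α) : EndSt s ([] : List (VEdge α β)) = s := rfl

lemma endSt_concat (s : α) (l : List (VEdge α β)) (e : VEdge α β) :
    EndSt s (l ++ [e]) = e.2.2 := by
  simp [EndSt, List.getLast?_concat]

lemma pref_zero (π : ℕ → VEdge α β) : Pref π 0 = [] := rfl

lemma pref_succ (π : ℕ → VEdge α β) (n : ℕ) :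
    Pref π (n + 1) = Pref π n ++ [π n] := by
  rw [Pref, List.ofFn_succ', List.concat_eq_append]
  simp [Pref]

lemma pref_ne_nil (π : ℕ → VEdge α β) (n : ℕ) : Pref π (n + 1) ≠ [] := by
  rw [pref_succ]; simp

lemma endSt_pref_succ (s : α) (π : ℕ → VEdge α β) (n : ℕ) :
    EndSt s (Pref π (n + 1)) = (π n).2.2 := by
  rw [pref_succ, endSt_concat]

lemma stAt_eq (s : α) (π : ℕ → VEdge α β) (n : ℕ) :
    StAt s π n = EndSt s (Pref π n) := by
  cases n with
  | zero => rfl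
  | succ m => rw [endSt_pref_succ]; rfl

lemma pref_congr {π π' : ℕ → VEdge α β} {n : ℕ} (h : ∀ i < n, π i = π' i) :
    Pref π n = Pref π' n :=
  congrArg List.ofFn (funext fun i => h i i.2)

lemma tail_pref (π : ℕ → VEdge α β) (n : ℕ) :
    (Pref π (n + 1)).tail = Pref (fun k => π (k + 1)) n := by
  rw [Pref, List.ofFn_succ]
  simp [Pref]

lemma isPrefixFrom_nil (E : Set (VEdge α β)) (s : α) : IsPrefixFrom E s [] := by
  refine ⟨by simp, List.isChain_nil, by simp⟩

lemma isPrefixFrom_concat {E : Set (VEdge α β)} {s : α} {l : List (VEdge α β)}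
    {e : VEdge α β} (h : IsPrefixFrom E s l) (he : e ∈ E) (hs : e.1 = EndSt s l) :
    IsPrefixFrom E s (l ++ [e]) := by
  obtain ⟨h1, h2, h3⟩ := h
  refine ⟨?_, ?_, ?_⟩
  · intro f hf
    rcases List.mem_append.mp hf with hf | hf
    · exact h1 f hf
    · simp at hf; subst hf; exact he
  · rw [List.Chain', List.isChain_append]
    refine ⟨h2, List.isChain_singleton e, ?_⟩
    intro x hx y hy
    simp at hy; subst hy
    rcases l.eq_nil_or_concat with rfl | ⟨L, b, rfl⟩
    · simp at hx
    · simp only [List.concat_eq_append] at hx hs ⊢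
      rw [List.getLast?_concat] at hx
      simp at hx; subst hx
      rw [endSt_concat] at hs
      exact hs.symm
  · intro f hf
    cases l with
    | nil => simp at hf; subst hf; rw [hs, endSt_nil]
    | cons a l' => simp at hf; subst hf; exact h3 a rfl

lemma isPrefixFrom_of_concat {E : Set (VEdge α β)} {s : α} {l : List (VEdge α β)}
    {e : VEdge α β} (h : IsPrefixFrom E s (l ++ [e])) :
    IsPrefixFrom E s l ∧ e ∈ E ∧ e.1 = EndSt s l := by
  obtain ⟨h1, h2, h3⟩ := h
  rw [List.Chain', List.isChain_append] at h2
  refine ⟨⟨fun f hf => h1 f (List.mem_append.mpr (Or.inl hf)), h2.1, ?_⟩, ?_, ?_⟩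
  · intro f hf
    cases l with
    | nil => simp at hf
    | cons a l' => simp at hf; subst hf; exact h3 a (by simp)
  · exact h1 e (by simp)
  · rcases l.eq_nil_or_concat with rfl | ⟨L, b, rfl⟩
    · rw [endSt_nil]; exact h3 e (by simp)
    · rw [List.concat_eq_append, endSt_concat]
      have := h2.2.2 b (by rw [List.concat_eq_append, List.getLast?_concat]; rfl) e (by simp)
      exact this.symm

lemma isPrefixFrom_pref {E : Set (VEdge α β)} {s : α} {π : ℕ → VEdge α β}
    (h : IsPlay E s π) (n : ℕ) : IsPrefixFrom E s (Pref π n) := by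
  induction n with
  | zero => exact isPrefixFrom_nil E s
  | succ m ih =>
    rw [pref_succ]
    refine isPrefixFrom_concat ih (h.1 m) ?_
    cases m with
    | zero => rw [pref_zero, endSt_nil]; exact h.2.1
    | succ k => rw [endSt_pref_succ]; exact (h.2.2 k).symm

lemma sum_map_pref (g : VEdge α β → ℤ) (π : ℕ → VEdge α β) (n : ℕ) :
    ((Pref π n).map g).sum = ∑ i ∈ Finset.range n, g (π i) := by
  rw [Pref, List.map_ofFn, List.sum_ofFn]
  exact Fin.sum_univ_eq_sum_range (fun i => g (π i)) n

lemma elc_succ (w : VEdge α β → ℤ) (π : ℕ → VEdge α β) (n : ℕ) :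
    ELc w π (n + 1) = ELc w π n + w (π n) :=
  Finset.sum_range_succ _ n

lemma elc_congr {w : VEdge α β → ℤ} {π π' : ℕ → VEdge α β} {n : ℕ}
    (h : ∀ i < n, π i = π' i) : ELc w π n = ELc w π' n :=
  Finset.sum_congr rfl fun i hi => by rw [h i (Finset.mem_range.mp hi)]

lemma elc_eventually_const {w : VEdge α β → ℤ} {π : ℕ → VEdge α β} {N : ℕ}
    (h : ∀ k ≥ N, w (π k) = 0) : ∀ n ≥ N, ELc w π n = ELc w π N := by
  intro n hn
  induction n with
  | zero =>
    have : N = 0 := by omega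
    rw [this]
  | succ m ih =>
    rcases Nat.lt_or_ge N (m+1) with hlt | hge
    · have hm : m ≥ N := by omega
      rw [elc_succ, ih hm, h m hm, add_zero]
    · have : N = m + 1 := by omega
      rw [this]

-- limsup helpers
lemma limsupLE_of_eventually_zero (g : ℕ → ℚ) (N : ℕ) (h : ∀ n ≥ N, g n = 0) :
    LimsupLE (fun n => (∑ i ∈ Finset.range n, g i) / (n : ℚ)) 0 := by
  intro ε hε
  set C : ℚ := ∑ i ∈ Finset.range N, g i with hC
  refine ⟨max (N + 1) (Nat.ceil (|C| / ε) + 1), fun n hn => ?_⟩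
  have hnN : N ≤ n := le_trans (by omega) (le_of_max_le_left hn)
  have hn1 : 1 ≤ n := le_trans (by omega) (le_of_max_le_left hn)
  have hceil : Nat.ceil (|C| / ε) + 1 ≤ n := le_of_max_le_right hn
  have hsum : ∑ i ∈ Finset.range n, g i = C := by
    rw [← Finset.sum_range_add_sum_Ico g hnN]
    have : ∑ i ∈ Finset.Ico N n, g i = 0 :=
      Finset.sum_eq_zero fun i hi => h i (Finset.mem_Ico.mp hi).1
    rw [this, add_zero]
  simp only [hsum, zero_add]
  have hnpos : (0 : ℚ) < n := by exact_mod_cast hn1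
  rw [div_le_iff₀ hnpos]
  have h1 : |C| / ε ≤ (n : ℚ) := by
    calc |C| / ε ≤ (Nat.ceil (|C| / ε) : ℚ) := Nat.le_ceil _
    _ ≤ (n : ℚ) := by exact_mod_cast le_trans (by omega) hceil
  calc C ≤ |C| := le_abs_self C
  _ = ε * (|C| / ε) := by field_simp
  _ ≤ ε * n := by exact mul_le_mul_of_nonneg_left h1 (le_of_lt hε)

lemma le_zero_of_eventually_const (g : ℕ → ℚ) (M : ℕ) (c : ℚ)
    (h : ∀ n ≥ M, g n = c)
    (hl : LimsupLE (fun n => (∑ i ∈ Finset.range n, g i) / (n : ℚ)) 0) : c ≤ 0 := by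
  by_contra hc
  push_neg at hc
  obtain ⟨N₁, hN₁⟩ := hl (c / 2) (by linarith)
  set C : ℚ := ∑ i ∈ Finset.range M, g i with hC
  set D : ℚ := M * c - C with hD
  set n : ℕ := max M N₁ + (Nat.ceil (2 * D / c) + 1) with hn
  have hnM : M ≤ n := le_trans (le_max_left _ _) (Nat.le_add_right _ _)
  have hnN₁ : N₁ ≤ n := le_trans (le_max_right _ _) (Nat.le_add_right _ _)
  have hn1 : 1 ≤ n := by omega
  have hnpos : (0 : ℚ) < n := by exact_mod_cast hn1
  have hsum : ∑ i ∈ Finset.range n, g i = C + ((n : ℚ) - M) * c := by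
    rw [← Finset.sum_range_add_sum_Ico g hnM]
    have h1 : ∑ i ∈ Finset.Ico M n, g i = ((n - M : ℕ) : ℚ) * c := by
      rw [Finset.sum_congr rfl fun i hi => h i (Finset.mem_Ico.mp hi).1]
      rw [Finset.sum_const, Nat.card_Ico, nsmul_eq_mul]
    rw [h1, Nat.cast_sub hnM]
  have hle := hN₁ n hnN₁
  simp only [hsum, zero_add] at hle
  rw [div_le_iff₀ hnpos] at hle
  have hbig : 2 * D / c + 1 ≤ (n : ℚ) := by
    have h2 : (Nat.ceil (2 * D / c) + 1 : ℕ) ≤ n := by omega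
    have h3 : ((Nat.ceil (2 * D / c) + 1 : ℕ) : ℚ) ≤ (n : ℚ) := Nat.cast_le.mpr h2
    calc 2 * D / c + 1 ≤ (Nat.ceil (2 * D / c) : ℚ) + 1 := by
          have := Nat.le_ceil (2 * D / c); linarith
      _ = ((Nat.ceil (2 * D / c) + 1 : ℕ) : ℚ) := by push_cast; ring
      _ ≤ (n : ℚ) := h3
  have hD2 : 2 * D + c ≤ (n : ℚ) * c := by
    have h4 : (2 * D + c) / c ≤ (n : ℚ) := by
      rw [add_div, div_self (ne_of_gt hc)]; exact hbig
    exact (div_le_iff₀ hc).mp h4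
  -- from hle : C + ((n:ℚ) - M) * c ≤ c / 2 * n  derive contradiction
  nlinarith [hle, hD2, hc]



def initE (x₀ y₀ : ℤ) : VEdge GS (ℤ × ℤ × ℤ) := (GS.qinit, (x₀ + 1, y₀ + 1, -x₀ - y₀ + 1), GS.q0)
def stopE : VEdge GS (ℤ × ℤ × ℤ) := (GS.q0, (-1, -1, -1), GS.qstop)
def loopE : VEdge GS (ℤ × ℤ × ℤ) := (GS.qstop, (0, 0, 0), GS.qstop)

def invemb : GS → RQ
  | GS.q1 => RQ.q1
  | _ => RQ.q0

def mapE (e : VEdge RQ (ℤ × ℤ)) : VEdge GS (ℤ × ℤ × ℤ) :=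
  (emb e.1, (e.2.1.1, e.2.1.2, -e.2.1.1 - e.2.1.2), emb e.2.2)

def unmapE (e : VEdge GS (ℤ × ℤ × ℤ)) : VEdge RQ (ℤ × ℤ) :=
  (invemb e.1, (e.2.1.1, e.2.1.2.1), invemb e.2.2)

lemma emb_inj {a b : RQ} (h : emb a = emb b) : a = b := by
  cases a <;> cases b <;> simp_all [emb]

lemma invemb_emb (q : RQ) : invemb (emb q) = q := by cases q <;> rfl

lemma unmapE_mapE (e : VEdge RQ (ℤ × ℤ)) : unmapE (mapE e) = e := by
  obtain ⟨q, ⟨a, b⟩, q'⟩ := e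
  simp [unmapE, mapE, invemb_emb]

lemma mapE_inj {e f : VEdge RQ (ℤ × ℤ)} (h : mapE e = mapE f) : e = f := by
  have := congrArg unmapE h
  rwa [unmapE_mapE, unmapE_mapE] at this

lemma emb_ne_qinit (q : RQ) : emb q ≠ GS.qinit := by cases q <;> simp [emb]
lemma emb_ne_qstop (q : RQ) : emb q ≠ GS.qstop := by cases q <;> simp [emb]

lemma GE_cases {T : Set (VEdge RQ (ℤ × ℤ))} {x₀ y₀ : ℤ} {e : VEdge GS (ℤ × ℤ × ℤ)}
    (h : e ∈ GE T x₀ y₀) :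
    (∃ f ∈ T, e = mapE f) ∨ e = stopE ∨ e = loopE ∨ e = initE x₀ y₀ := by
  rcases h with ⟨q, a, b, q', hT, rfl⟩ | h | h | h
  · exact Or.inl ⟨(q, (a, b), q'), hT, rfl⟩
  · exact Or.inr (Or.inl h)
  · exact Or.inr (Or.inr (Or.inl h))
  · exact Or.inr (Or.inr (Or.inr h))

lemma mapE_mem_GE {T : Set (VEdge RQ (ℤ × ℤ))} {x₀ y₀ : ℤ} {f : VEdge RQ (ℤ × ℤ)}
    (hf : f ∈ T) : mapE f ∈ GE T x₀ y₀ := by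
  refine Or.inl ⟨f.1, f.2.1.1, f.2.1.2, f.2.2, ?_, rfl⟩
  simpa using hf

lemma stopE_mem_GE {T : Set (VEdge RQ (ℤ × ℤ))} {x₀ y₀ : ℤ} : stopE ∈ GE T x₀ y₀ :=
  Or.inr (Or.inl rfl)

lemma loopE_mem_GE {T : Set (VEdge RQ (ℤ × ℤ))} {x₀ y₀ : ℤ} : loopE ∈ GE T x₀ y₀ :=
  Or.inr (Or.inr (Or.inl rfl))

lemma initE_mem_GE {T : Set (VEdge RQ (ℤ × ℤ))} {x₀ y₀ : ℤ} : initE x₀ y₀ ∈ GE T x₀ y₀ :=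
  Or.inr (Or.inr (Or.inr rfl))

lemma GE_target_ne_qinit {T : Set (VEdge RQ (ℤ × ℤ))} {x₀ y₀ : ℤ} {e : VEdge GS (ℤ × ℤ × ℤ)}
    (h : e ∈ GE T x₀ y₀) : e.2.2 ≠ GS.qinit := by
  rcases GE_cases h with ⟨f, _, rfl⟩ | rfl | rfl | rfl
  · exact emb_ne_qinit f.2.2
  · simp [stopE]
  · simp [loopE]
  · simp [initE]

/-- The edge chosen by a strategy of `P₀` at a prefix ending in `qstop` is the loop. -/
lemma GE_source_qstop {T : Set (VEdge RQ (ℤ × ℤ))} {x₀ y₀ : ℤ} {e : VEdge GS (ℤ × ℤ × ℤ)}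
    (h : e ∈ GE T x₀ y₀) (hs : e.1 = GS.qstop) : e = loopE := by
  rcases GE_cases h with ⟨f, _, rfl⟩ | rfl | rfl | rfl
  · exact absurd hs (emb_ne_qstop f.1)
  · simp [stopE] at hs
  · rfl
  · simp [initE] at hs

lemma GE_source_qinit {T : Set (VEdge RQ (ℤ × ℤ))} {x₀ y₀ : ℤ} {e : VEdge GS (ℤ × ℤ × ℤ)}
    (h : e ∈ GE T x₀ y₀) (hs : e.1 = GS.qinit) : e = initE x₀ y₀ := by
  rcases GE_cases h with ⟨f, _, rfl⟩ | rfl | rfl | rfl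
  · exact absurd hs (emb_ne_qinit f.1)
  · simp [stopE] at hs
  · simp [loopE] at hs
  · rfl

lemma GE_source_q0 {T : Set (VEdge RQ (ℤ × ℤ))} {x₀ y₀ : ℤ} {e : VEdge GS (ℤ × ℤ × ℤ)}
    (h : e ∈ GE T x₀ y₀) (hs : e.1 = GS.q0) (hne : e ≠ stopE) :
    ∃ f ∈ T, f.1 = RQ.q0 ∧ e = mapE f := by
  rcases GE_cases h with ⟨f, hf, rfl⟩ | rfl | rfl | rfl
  · refine ⟨f, hf, ?_, rfl⟩
    have : emb f.1 = GS.q0 := hs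
    have : emb f.1 = emb RQ.q0 := this
    exact emb_inj this
  · exact absurd rfl hne
  · simp [loopE] at hs
  · simp [initE] at hs

-- ### structure of prefixes in G

/-- Any `G`-prefix ending in an embedded robot state is the initial edge followed by
embedded robot edges, and projects to a robot prefix. -/
lemma struct {T : Set (VEdge RQ (ℤ × ℤ))} {x₀ y₀ : ℤ} :
    ∀ ρ : List (VEdge GS (ℤ × ℤ × ℤ)), IsPrefixFrom (GE T x₀ y₀) GS.qinit ρ →
    ∀ q : RQ, EndSt GS.qinit ρ = emb q →
    ∃ r : List (VEdge RQ (ℤ × ℤ)), ρ = initE x₀ y₀ :: r.map mapE ∧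
      IsPrefixFrom T RQ.q0 r ∧ EndSt RQ.q0 r = q := by
  intro ρ
  induction ρ using List.reverseRecOn with
  | nil =>
    intro _ q hq
    rw [endSt_nil] at hq
    exact absurd hq.symm (emb_ne_qinit q)
  | append_singleton l e ih =>
    intro hpre q hq
    obtain ⟨hl, he, hes⟩ := isPrefixFrom_of_concat hpre
    rw [endSt_concat] at hq
    rcases GE_cases he with ⟨f, hfT, rfl⟩ | rfl | rfl | rfl
    · -- robot-image edge
      have hq' : f.2.2 = q := emb_inj hq
      have hsrc : EndSt GS.qinit l = emb f.1 := hes.symm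
      obtain ⟨r, hr1, hr2, hr3⟩ := ih hl f.1 hsrc
      refine ⟨r ++ [(f.1, (f.2.1.1, f.2.1.2), f.2.2)], ?_, ?_, ?_⟩
      · rw [hr1, List.map_append]
        simp [mapE]
      · refine isPrefixFrom_concat hr2 (by simpa using hfT) ?_
        rw [hr3]
      · rw [endSt_concat, hq']
    · exact absurd ((by simpa [stopE] using hq : GS.qstop = emb q).symm) (emb_ne_qstop q)
    · exact absurd ((by simpa [loopE] using hq : GS.qstop = emb q).symm) (emb_ne_qstop q)
    · -- initial edge: l must be empty
      have hl0 : l = [] := by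
        rcases l.eq_nil_or_concat with rfl | ⟨L, b, rfl⟩
        · rfl
        · exfalso
          simp only [List.concat_eq_append] at hl hes
          obtain ⟨_, hb, _⟩ := isPrefixFrom_of_concat hl
          rw [endSt_concat] at hes
          exact GE_target_ne_qinit hb hes.symm
      subst hl0
      have hq0 : q = RQ.q0 := by
        cases q
        · rfl
        · exact absurd hq (by simp [initE, emb])
      refine ⟨[], by simp, isPrefixFrom_nil T RQ.q0, by rw [endSt_nil, hq0]⟩

/-- Lifting a robot prefix to a `G`-prefix. -/
lemma liftPrefix {T : Set (VEdge RQ (ℤ × ℤ))} {x₀ y₀ : ℤ} :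
    ∀ r : List (VEdge RQ (ℤ × ℤ)), IsPrefixFrom T RQ.q0 r →
      IsPrefixFrom (GE T x₀ y₀) GS.qinit (initE x₀ y₀ :: r.map mapE) ∧
      EndSt GS.qinit (initE x₀ y₀ :: r.map mapE) = emb (EndSt RQ.q0 r) := by
  intro r
  induction r using List.reverseRecOn with
  | nil =>
    intro _
    constructor
    · refine ⟨?_, ?_, ?_⟩
      · intro e h; simp at h; subst h; exact initE_mem_GE
      · exact List.isChain_singleton _
      · intro e h; simp at h; subst h; rfl
    · have : (initE x₀ y₀ :: ([] : List (VEdge RQ (ℤ × ℤ))).map mapE) = [] ++ [initE x₀ y₀] := by simp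
      rw [this, endSt_concat, endSt_nil]
      rfl
  | append_singleton l f ih =>
    intro hpre
    obtain ⟨hl, hf, hfs⟩ := isPrefixFrom_of_concat hpre
    obtain ⟨ih1, ih2⟩ := ih hl
    have key : initE x₀ y₀ :: (l ++ [f]).map mapE =
        (initE x₀ y₀ :: l.map mapE) ++ [mapE f] := by simp
    constructor
    · rw [key]
      refine isPrefixFrom_concat ih1 (mapE_mem_GE hf) ?_
      rw [ih2, ← hfs]
      rfl
    · rw [key, endSt_concat, endSt_concat]
      rfl



lemma elc_add3 (π : ℕ → VEdge GS (ℤ × ℤ × ℤ)) (n : ℕ) :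
    ELc (fun e => e.2.1.1 + e.2.1.2.1 + e.2.1.2.2) π n =
      ELc (fun e => e.2.1.1) π n + ELc (fun e => e.2.1.2.1) π n +
        ELc (fun e => e.2.1.2.2) π n := by
  simp [ELc, Finset.sum_add_distrib]

-- ### Direction 1: RobotWin → GWin

lemma mem_S0G {x : GS} : x ∈ ({GS.qinit, GS.q0, GS.qstop} : Set GS) ↔
    (x = GS.qinit ∨ x = GS.q0 ∨ x = GS.qstop) := by simp

/-- The strategy of `P₀` in `G` obtained from a robot-game strategy. -/
def liftStrat (σR : List (VEdge RQ (ℤ × ℤ)) → VEdge RQ (ℤ × ℤ)) (x₀ y₀ : ℤ)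
    (ρ : List (VEdge GS (ℤ × ℤ × ℤ))) : VEdge GS (ℤ × ℤ × ℤ) :=
  if ρ = [] then initE x₀ y₀
  else if EndSt GS.qinit ρ = GS.qstop then loopE
  else if x₀ + ((ρ.tail.map unmapE).map (fun f => f.2.1.1)).sum = 0 ∧
          y₀ + ((ρ.tail.map unmapE).map (fun f => f.2.1.2)).sum = 0 ∧
          EndSt GS.qinit ρ = GS.q0
       then stopE
       else mapE (σR (ρ.tail.map unmapE))

lemma liftStrat_isStrategy {T : Set (VEdge RQ (ℤ × ℤ))} {x₀ y₀ : ℤ}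
    {σR : List (VEdge RQ (ℤ × ℤ)) → VEdge RQ (ℤ × ℤ)}
    (hσ : IsStrategy T {RQ.q0} RQ.q0 σR) :
    IsStrategy (GE T x₀ y₀) {GS.qinit, GS.q0, GS.qstop} GS.qinit (liftStrat σR x₀ y₀) := by
  intro ρ hρ hmem
  rcases eq_or_ne ρ [] with rfl | hne
  · rw [liftStrat, if_pos rfl]
    exact ⟨initE_mem_GE, rfl⟩
  · have h0 : EndSt GS.qinit ρ ≠ GS.qinit := by
      rcases ρ.eq_nil_or_concat with rfl | ⟨L, b, rfl⟩
      · exact absurd rfl hne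
      · simp only [List.concat_eq_append]
        rw [endSt_concat]
        exact GE_target_ne_qinit (hρ.1 b (by simp))
    rcases mem_S0G.mp hmem with h | h | h
    · exact absurd h h0
    · rw [liftStrat, if_neg hne, if_neg (by rw [h]; simp)]
      by_cases hz : x₀ + ((ρ.tail.map unmapE).map (fun f => f.2.1.1)).sum = 0 ∧
          y₀ + ((ρ.tail.map unmapE).map (fun f => f.2.1.2)).sum = 0 ∧
          EndSt GS.qinit ρ = GS.q0
      · rw [if_pos hz]
        exact ⟨stopE_mem_GE, h.symm⟩
      · rw [if_neg hz]
        obtain ⟨r, hr1, hr2, hr3⟩ := struct ρ hρ RQ.q0 (by rw [h]; rfl)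
        have htail : ρ.tail.map unmapE = r := by
          rw [hr1]
          simp [List.map_map, Function.comp_def, unmapE_mapE]
        obtain ⟨hT, hsrc⟩ := hσ r hr2 (by rw [hr3]; rfl)
        rw [htail]
        refine ⟨mapE_mem_GE hT, ?_⟩
        show emb (σR r).1 = _
        rw [hsrc, hr3, h]
        rfl
    · rw [liftStrat, if_neg hne, if_pos h]
      exact ⟨loopE_mem_GE, h.symm⟩

lemma direction1 {T : Set (VEdge RQ (ℤ × ℤ))} {x₀ y₀ : ℤ}
    (h : RobotWin T x₀ y₀) : GWin T x₀ y₀ := by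
  classical
  obtain ⟨σR, hσ, hwin⟩ := h
  refine ⟨liftStrat σR x₀ y₀, liftStrat_isStrategy hσ, ?_⟩
  intro π hout
  obtain ⟨hplay, houtc⟩ := hout
  have hpref : ∀ n, IsPrefixFrom (GE T x₀ y₀) GS.qinit (Pref π n) :=
    isPrefixFrom_pref hplay
  have hπ0 : π 0 = initE x₀ y₀ := by
    have := houtc 0 (by rw [pref_zero, endSt_nil]; simp)
    rw [this, pref_zero, liftStrat, if_pos rfl]
  set πR : ℕ → VEdge RQ (ℤ × ℤ) := fun k => unmapE (π (k + 1)) with hπRdef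
  -- decomposition of prefixes, as long as no stop edge occurred
  have hdec : ∀ n, (∀ k < n + 1, π k ≠ stopE) →
      Pref π (n + 1) = initE x₀ y₀ :: (Pref πR n).map mapE ∧
      IsPrefixFrom T RQ.q0 (Pref πR n) ∧
      EndSt GS.qinit (Pref π (n + 1)) = emb (EndSt RQ.q0 (Pref πR n)) := by
    intro n
    induction n with
    | zero =>
      intro _
      refine ⟨by rw [pref_succ, pref_zero, hπ0]; rfl, isPrefixFrom_nil T RQ.q0, ?_⟩
      rw [endSt_pref_succ, hπ0, pref_zero, endSt_nil]
      rfl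
    | succ m ih =>
      intro hns
      obtain ⟨d1, d2, d3⟩ := ih (fun k hk => hns k (by omega))
      have hsrc : (π (m + 1)).1 = emb (EndSt RQ.q0 (Pref πR m)) := by
        rw [← hplay.2.2 m, ← endSt_pref_succ GS.qinit π m, d3]
      rcases GE_cases (hplay.1 (m + 1)) with ⟨f, hfT, hf⟩ | hf | hf | hf
      · have hπRm : πR m = f := by rw [hπRdef]; simp only [hf, unmapE_mapE]
        have hπm1 : π (m + 1) = mapE (πR m) := by rw [hπRm]; exact hf
        have hsrc2 : (πR m).1 = EndSt RQ.q0 (Pref πR m) := by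
          apply emb_inj
          rw [← hsrc, hπm1]
          rfl
        refine ⟨?_, ?_, ?_⟩
        · rw [pref_succ π (m + 1), d1, pref_succ πR m, List.map_append]
          simp [hπm1]
        · rw [pref_succ]
          refine isPrefixFrom_concat d2 ?_ hsrc2
          rw [hπRm]; exact hfT
        · rw [endSt_pref_succ, endSt_pref_succ, hπm1]
          rfl
      · exact absurd hf (hns (m + 1) (by omega))
      · exfalso
        rw [hf] at hsrc
        exact emb_ne_qstop _ hsrc.symm
      · exfalso
        rw [hf] at hsrc
        exact emb_ne_qinit _ hsrc.symm
  -- a stop edge is eventually taken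
  have hstop : ∃ N, π N = stopE := by
    by_contra hns
    push_neg at hns
    have hdec' := fun n => hdec n (fun k _ => hns k)
    -- πR is a play of the robot game
    have hplayR : IsPlay T RQ.q0 πR := by
      refine ⟨?_, ?_, ?_⟩
      · intro k
        have := (hdec' (k + 1)).2.1.1 (πR k)
        apply this
        rw [pref_succ]
        simp
      · show invemb (π 1).1 = RQ.q0
        rw [← hplay.2.2 0, hπ0]
        rfl
      · intro i
        show invemb (π (i + 1)).2.2 = invemb (π (i + 2)).1
        rw [hplay.2.2 (i + 1)]
    have houtR : IsOutcome T {RQ.q0} RQ.q0 σR πR := by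
      refine ⟨hplayR, ?_⟩
      intro n hmem
      have hend : EndSt RQ.q0 (Pref πR n) = RQ.q0 := hmem
      have hendG : EndSt GS.qinit (Pref π (n + 1)) = GS.q0 := by
        rw [(hdec' n).2.2, hend]; rfl
      have hπn1 := houtc (n + 1) (by rw [hendG]; simp)
      have htail : (Pref π (n + 1)).tail.map unmapE = Pref πR n := by
        rw [(hdec' n).1]
        simp [List.map_map, Function.comp_def, unmapE_mapE]
      rw [liftStrat, if_neg (pref_ne_nil π n), if_neg (by rw [hendG]; simp)] at hπn1
      by_cases hz : x₀ + (((Pref π (n + 1)).tail.map unmapE).map (fun f => f.2.1.1)).sum = 0 ∧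
          y₀ + (((Pref π (n + 1)).tail.map unmapE).map (fun f => f.2.1.2)).sum = 0 ∧
          EndSt GS.qinit (Pref π (n + 1)) = GS.q0
      · rw [if_pos hz] at hπn1
        exact absurd hπn1 (hns (n + 1))
      · rw [if_neg hz, htail] at hπn1
        show unmapE (π (n + 1)) = σR (Pref πR n)
        rw [hπn1, unmapE_mapE]
    obtain ⟨n, hst, hx, hy⟩ := hwin πR houtR
    rw [stAt_eq] at hst
    have hendG : EndSt GS.qinit (Pref π (n + 1)) = GS.q0 := by
      rw [(hdec' n).2.2, hst]; rfl
    have hπn1 := houtc (n + 1) (by rw [hendG]; simp)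
    have htail : (Pref π (n + 1)).tail.map unmapE = Pref πR n := by
      rw [(hdec' n).1]
      simp [List.map_map, Function.comp_def, unmapE_mapE]
    rw [liftStrat, if_neg (pref_ne_nil π n), if_neg (by rw [hendG]; simp),
      if_pos ?_] at hπn1
    · exact hns (n + 1) hπn1
    · rw [htail]
      refine ⟨?_, ?_, hendG⟩
      · rw [sum_map_pref]; exact hx
      · rw [sum_map_pref]; exact hy
  -- take the first stop
  obtain ⟨N, hN, hmin⟩ : ∃ N, π N = stopE ∧ ∀ k < N, π k ≠ stopE :=
    ⟨Nat.find hstop, Nat.find_spec hstop, fun k hk => Nat.find_min hstop hk⟩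
  obtain ⟨M, rfl⟩ : ∃ M, N = M + 1 := by
    cases N with
    | zero => exact absurd (hπ0 ▸ hN) (by simp [initE, stopE])
    | succ M => exact ⟨M, rfl⟩
  obtain ⟨d1, d2, d3⟩ := hdec M (fun k hk => hmin k hk)
  have hsrcN : (π (M + 1)).1 = GS.q0 := by rw [hN]; rfl
  have hendN : EndSt GS.qinit (Pref π (M + 1)) = GS.q0 := by
    rw [endSt_pref_succ, hplay.2.2 M]
    exact hsrcN
  have hπN := houtc (M + 1) (by rw [hendN]; simp)
  have htail : (Pref π (M + 1)).tail.map unmapE = Pref πR M := by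
    rw [d1]
    simp [List.map_map, Function.comp_def, unmapE_mapE]
  rw [liftStrat, if_neg (pref_ne_nil π M), if_neg (by rw [hendN]; simp)] at hπN
  have hz : x₀ + (((Pref π (M + 1)).tail.map unmapE).map (fun f => f.2.1.1)).sum = 0 ∧
      y₀ + (((Pref π (M + 1)).tail.map unmapE).map (fun f => f.2.1.2)).sum = 0 ∧
      EndSt GS.qinit (Pref π (M + 1)) = GS.q0 := by
    by_contra hzc
    rw [if_neg hzc, hN] at hπN
    have := congrArg (fun e => e.2.2) hπN
    exact emb_ne_qstop _ this.symm
  obtain ⟨hzx, hzy, -⟩ := hz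
  rw [htail, sum_map_pref] at hzx hzy
  -- after the stop edge, only the loop is taken
  have hloop : ∀ k, π (M + 2 + k) = loopE := by
    intro k
    induction k with
    | zero =>
      have hend : EndSt GS.qinit (Pref π (M + 2)) = GS.qstop := by
        rw [show M + 2 = (M + 1) + 1 from rfl, endSt_pref_succ, hN]
        rfl
      have h2 := houtc (M + 2) (by rw [hend]; simp)
      rw [liftStrat, if_neg (pref_ne_nil π (M + 1)), if_pos hend] at h2
      exact h2
    | succ k ih =>
      have hend : EndSt GS.qinit (Pref π (M + 2 + k + 1)) = GS.qstop := by
        rw [endSt_pref_succ, ih]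
        rfl
      have h2 := houtc (M + 2 + k + 1) (by rw [hend]; simp)
      rw [liftStrat, if_neg (pref_ne_nil π (M + 2 + k)), if_pos hend] at h2
      exact h2
  have hloop' : ∀ m ≥ M + 2, π m = loopE := by
    intro m hm
    have := hloop (m - (M + 2))
    rwa [show M + 2 + (m - (M + 2)) = m by omega] at this
  -- energy levels at time M+2
  have e1 : ELc (fun e => e.2.1.1) π (M + 1) = 1 := by
    rw [ELc, ← sum_map_pref (fun e => e.2.1.1) π (M + 1), d1, List.map_cons,
      List.sum_cons, List.map_map,
      sum_map_pref ((fun e : VEdge GS (ℤ × ℤ × ℤ) => e.2.1.1) ∘ mapE) πR M]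
    show (x₀ + 1) + (∑ i ∈ Finset.range M, (πR i).2.1.1) = 1
    omega
  have e2 : ELc (fun e => e.2.1.2.1) π (M + 1) = 1 := by
    rw [ELc, ← sum_map_pref (fun e => e.2.1.2.1) π (M + 1), d1, List.map_cons,
      List.sum_cons, List.map_map,
      sum_map_pref ((fun e : VEdge GS (ℤ × ℤ × ℤ) => e.2.1.2.1) ∘ mapE) πR M]
    show (y₀ + 1) + (∑ i ∈ Finset.range M, (πR i).2.1.2) = 1
    omega
  have es : ELc (fun e => e.2.1.1 + e.2.1.2.1 + e.2.1.2.2) π (M + 1) = 3 := by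
    rw [ELc, ← sum_map_pref (fun e => e.2.1.1 + e.2.1.2.1 + e.2.1.2.2) π (M + 1), d1,
      List.map_cons, List.sum_cons, List.map_map,
      sum_map_pref ((fun e : VEdge GS (ℤ × ℤ × ℤ) => e.2.1.1 + e.2.1.2.1 + e.2.1.2.2) ∘ mapE) πR M]
    have hz0 : (∑ i ∈ Finset.range M,
        ((fun e : VEdge GS (ℤ × ℤ × ℤ) => e.2.1.1 + e.2.1.2.1 + e.2.1.2.2) ∘ mapE) (πR i)) = 0 := by
      refine Finset.sum_eq_zero fun i _ => ?_
      show (πR i).2.1.1 + (πR i).2.1.2 + (-(πR i).2.1.1 - (πR i).2.1.2) = 0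
      ring
    rw [hz0]
    show (x₀ + 1) + ((y₀ + 1)) + (-x₀ - y₀ + 1) + 0 = 3
    ring
  have E1 : ELc (fun e => e.2.1.1) π (M + 2) = 0 := by
    rw [show M + 2 = (M + 1) + 1 from rfl, elc_succ, e1, hN]
    norm_num [stopE]
  have E2 : ELc (fun e => e.2.1.2.1) π (M + 2) = 0 := by
    rw [show M + 2 = (M + 1) + 1 from rfl, elc_succ, e2, hN]
    norm_num [stopE]
  have Es : ELc (fun e => e.2.1.1 + e.2.1.2.1 + e.2.1.2.2) π (M + 2) = 0 := by
    rw [show M + 2 = (M + 1) + 1 from rfl, elc_succ, es, hN]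
    norm_num [stopE]
  have E3 : ELc (fun e => e.2.1.2.2) π (M + 2) = 0 := by
    have := elc_add3 π (M + 2)
    omega
  -- eventually-zero energy levels
  have hev1 : ∀ m ≥ M + 2, ELc (fun e => e.2.1.1) π m = 0 := by
    intro m hm
    rw [elc_eventually_const (w := fun e => e.2.1.1) (π := π)
      (fun k hk => by rw [hloop' k hk]; rfl : ∀ k ≥ M + 2, (π k).2.1.1 = 0) m hm, E1]
  have hev2 : ∀ m ≥ M + 2, ELc (fun e => e.2.1.2.1) π m = 0 := by
    intro m hm
    rw [elc_eventually_const (w := fun e => e.2.1.2.1) (π := π)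
      (fun k hk => by rw [hloop' k hk]; rfl : ∀ k ≥ M + 2, (π k).2.1.2.1 = 0) m hm, E2]
  have hev3 : ∀ m ≥ M + 2, ELc (fun e => e.2.1.2.2) π m = 0 := by
    intro m hm
    rw [elc_eventually_const (w := fun e => e.2.1.2.2) (π := π)
      (fun k hk => by rw [hloop' k hk]; rfl : ∀ k ≥ M + 2, (π k).2.1.2.2 = 0) m hm, E3]
  refine ⟨?_, ?_, ?_⟩
  · exact limsupLE_of_eventually_zero _ (M + 1) (fun i hi => by rw [hev1 (i + 1) (by omega)]; simp)
  · exact limsupLE_of_eventually_zero _ (M + 1) (fun i hi => by rw [hev2 (i + 1) (by omega)]; simp)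
  · exact limsupLE_of_eventually_zero _ (M + 1) (fun i hi => by rw [hev3 (i + 1) (by omega)]; simp)

-- ### Direction 2: GWin → RobotWin

lemma emb_mem_S0G {q : RQ} (h : emb q ∈ ({GS.qinit, GS.q0, GS.qstop} : Set GS)) :
    q = RQ.q0 := by cases q <;> simp_all [emb]

lemma direction2 {T : Set (VEdge RQ (ℤ × ℤ))} {x₀ y₀ : ℤ}
    (htotal : ∀ q : RQ, ∃ (v : ℤ × ℤ) (q' : RQ), (q, v, q') ∈ T)
    (h : GWin T x₀ y₀) : RobotWin T x₀ y₀ := by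
  classical
  obtain ⟨σG, hσG, hwin⟩ := h
  obtain ⟨v0, q0', hd0⟩ := htotal RQ.q0
  set liftP : List (VEdge RQ (ℤ × ℤ)) → List (VEdge GS (ℤ × ℤ × ℤ)) :=
    fun r => initE x₀ y₀ :: r.map mapE with hliftP
  set σR : List (VEdge RQ (ℤ × ℤ)) → VEdge RQ (ℤ × ℤ) :=
    fun r => if σG (liftP r) = stopE then (RQ.q0, v0, q0') else unmapE (σG (liftP r)) with hσR
  have hσG0 : σG [] = initE x₀ y₀ := by
    obtain ⟨hmem, hsrc⟩ := hσG [] (isPrefixFrom_nil _ _) (by rw [endSt_nil]; simp)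
    exact GE_source_qinit hmem (by rw [hsrc, endSt_nil])
  have hstratR : IsStrategy T {RQ.q0} RQ.q0 σR := by
    intro r hr hend
    have hend' : EndSt RQ.q0 r = RQ.q0 := hend
    obtain ⟨hpre, hendG⟩ := liftPrefix r hr
    have hendG0 : EndSt GS.qinit (liftP r) = GS.q0 := by rw [hendG, hend']; rfl
    obtain ⟨hmem, hsrc⟩ := hσG (liftP r) hpre (by rw [hendG0]; simp)
    by_cases hs : σG (liftP r) = stopE
    · simp only [hσR]
      rw [if_pos hs]
      exact ⟨hd0, by rw [hend']⟩
    · obtain ⟨f, hfT, hf1, hfe⟩ := GE_source_q0 hmem (by rw [hsrc, hendG0]) hs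
      simp only [hσR]
      rw [if_neg hs, hfe, unmapE_mapE]
      exact ⟨hfT, by rw [hf1, hend']⟩
  refine ⟨σR, hstratR, ?_⟩
  rintro πR ⟨hplayR, houtR⟩
  set πG : ℕ → VEdge GS (ℤ × ℤ × ℤ) :=
    fun k => Nat.rec (initE x₀ y₀) (fun m _ => mapE (πR m)) k with hπG
  have hπG0 : πG 0 = initE x₀ y₀ := rfl
  have hπGs : ∀ m, πG (m + 1) = mapE (πR m) := fun m => rfl
  have hPrefG : ∀ m, Pref πG (m + 1) = liftP (Pref πR m) := by
    intro m
    induction m with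
    | zero => rw [pref_succ, pref_zero]; rfl
    | succ k ih =>
      rw [pref_succ, ih, pref_succ]
      simp [hliftP, hπGs]
  have hendG : ∀ m, EndSt GS.qinit (Pref πG (m + 1)) = emb (EndSt RQ.q0 (Pref πR m)) := by
    intro m
    rw [hPrefG m]
    exact (liftPrefix _ (isPrefixFrom_pref hplayR m)).2
  have hplayG : IsPlay (GE T x₀ y₀) GS.qinit πG := by
    refine ⟨?_, rfl, ?_⟩
    · intro i
      cases i with
      | zero => exact initE_mem_GE
      | succ k => rw [hπGs]; exact mapE_mem_GE (hplayR.1 k)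
    · intro i
      cases i with
      | zero =>
        show (initE x₀ y₀).2.2 = (mapE (πR 0)).1
        show GS.q0 = emb (πR 0).1
        rw [hplayR.2.1]
        rfl
      | succ k =>
        show (mapE (πR k)).2.2 = (mapE (πR (k + 1))).1
        show emb (πR k).2.2 = emb (πR (k + 1)).1
        rw [hplayR.2.2 k]
  -- the key step of P0 in G at a robot prefix ending in q0, when not stopping
  have hstepG : ∀ m, EndSt RQ.q0 (Pref πR m) = RQ.q0 → σG (liftP (Pref πR m)) ≠ stopE →
      πG (m + 1) = σG (Pref πG (m + 1)) := by
    intro m hq0m hne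
    have hπRm : πR m = σR (Pref πR m) := houtR m hq0m
    have hpre := liftPrefix (T := T) (x₀ := x₀) (y₀ := y₀) (Pref πR m) (isPrefixFrom_pref hplayR m)
    obtain ⟨hmemE, hsrcE⟩ := hσG (liftP (Pref πR m)) hpre.1 (by rw [hpre.2, hq0m]; simp [emb])
    obtain ⟨f, hfT, hf1, hfe⟩ := GE_source_q0 hmemE (by rw [hsrcE, hpre.2, hq0m]; rfl) hne
    rw [hPrefG m, hπGs m, hπRm]
    simp only [hσR]
    rw [if_neg hne, hfe, unmapE_mapE]
  by_cases H : ∃ m, EndSt RQ.q0 (Pref πR m) = RQ.q0 ∧ σG (liftP (Pref πR m)) = stopE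
  · -- the strategy stops: the robot game is won at the first stopping time
    obtain ⟨n, ⟨hq0, hstop⟩, hmin⟩ :
        ∃ n, (EndSt RQ.q0 (Pref πR n) = RQ.q0 ∧ σG (liftP (Pref πR n)) = stopE) ∧
          ∀ k < n, ¬(EndSt RQ.q0 (Pref πR k) = RQ.q0 ∧ σG (liftP (Pref πR k)) = stopE) :=
      ⟨Nat.find H, Nat.find_spec H, fun k hk => Nat.find_min H hk⟩
    set πG' : ℕ → VEdge GS (ℤ × ℤ × ℤ) :=
      fun k => if k ≤ n then πG k else if k = n + 1 then stopE else loopE with hπG'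
    have hag : ∀ i ≤ n, πG' i = πG i := fun i hi => if_pos hi
    have hstep : πG' (n + 1) = stopE := by
      simp only [hπG']
      rw [if_neg (by omega : ¬(n + 1 ≤ n))]
      simp
    have hloopk : ∀ k ≥ n + 2, πG' k = loopE := by
      intro k hk
      simp only [hπG']
      rw [if_neg (by omega), if_neg (by omega)]
    have hPrefG' : ∀ k ≤ n + 1, Pref πG' k = Pref πG k :=
      fun k hk => pref_congr (fun i hi => hag i (by omega))
    have htargn : (πG n).2.2 = GS.q0 := by
      cases n with
      | zero => rfl
      | succ m =>
        show emb (πR m).2.2 = GS.q0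
        rw [← endSt_pref_succ RQ.q0 πR m, hq0]
        rfl
    have hplayG' : IsPlay (GE T x₀ y₀) GS.qinit πG' := by
      refine ⟨?_, ?_, ?_⟩
      · intro i
        by_cases h1 : i ≤ n
        · rw [hag i h1]; exact hplayG.1 i
        · by_cases h2 : i = n + 1
          · subst h2; rw [hstep]; exact stopE_mem_GE
          · rw [hloopk i (by omega)]; exact loopE_mem_GE
      · rw [hag 0 (by omega)]; exact hplayG.2.1
      · intro i
        by_cases h1 : i + 1 ≤ n
        · rw [hag i (by omega), hag (i + 1) h1]; exact hplayG.2.2 i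
        · by_cases h2 : i = n
          · rw [show i = n from h2, hag n le_rfl, hstep, htargn]
            rfl
          · by_cases h3 : i = n + 1
            · rw [show i = n + 1 from h3, hstep, hloopk (n + 1 + 1) le_rfl]
              rfl
            · rw [hloopk i (by omega), hloopk (i + 1) (by omega)]
              rfl
    have houtG' : IsOutcome (GE T x₀ y₀) {GS.qinit, GS.q0, GS.qstop} GS.qinit σG πG' := by
      refine ⟨hplayG', ?_⟩
      intro k hmem
      rcases Nat.lt_or_ge k (n + 2) with hk | hk
      · by_cases hk1 : k = n + 1
        · subst hk1
          rw [hPrefG' (n + 1) le_rfl, hPrefG n, hstep]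
          exact hstop.symm
        · have hk2 : k ≤ n := by omega
          rw [hPrefG' k (by omega)] at hmem ⊢
          rw [hag k hk2]
          cases k with
          | zero =>
            rw [pref_zero, hσG0]
            rfl
          | succ m =>
            have hq0m : EndSt RQ.q0 (Pref πR m) = RQ.q0 := emb_mem_S0G (hendG m ▸ hmem)
            have hne : σG (liftP (Pref πR m)) ≠ stopE := fun hc => hmin m (by omega) ⟨hq0m, hc⟩
            exact hstepG m hq0m hne
      · have hend : EndSt GS.qinit (Pref πG' k) = GS.qstop := by
          obtain ⟨j, rfl⟩ : ∃ j, k = j + 1 := ⟨k - 1, by omega⟩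
          rw [endSt_pref_succ]
          by_cases hj : j = n + 1
          · rw [show j = n + 1 from hj, hstep]
            rfl
          · rw [hloopk j (by omega)]
            rfl
        obtain ⟨hmemE, hsrcE⟩ := hσG (Pref πG' k) (isPrefixFrom_pref hplayG' k) (by rw [hend]; simp)
        rw [hloopk k hk]
        exact (GE_source_qstop hmemE (by rw [hsrcE, hend])).symm
    obtain ⟨L1, L2, L3⟩ := hwin πG' houtG'
    set X : ℤ := x₀ + ∑ i ∈ Finset.range n, (πR i).2.1.1 with hX
    set Y : ℤ := y₀ + ∑ i ∈ Finset.range n, (πR i).2.1.2 with hY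
    have base1 : ELc (fun e => e.2.1.1) πG (n + 1) = X + 1 := by
      rw [ELc, Finset.sum_range_succ']
      show (∑ i ∈ Finset.range n, (πR i).2.1.1) + (x₀ + 1) = X + 1
      omega
    have base2 : ELc (fun e => e.2.1.2.1) πG (n + 1) = Y + 1 := by
      rw [ELc, Finset.sum_range_succ']
      show (∑ i ∈ Finset.range n, (πR i).2.1.2) + (y₀ + 1) = Y + 1
      omega
    have bases : ELc (fun e => e.2.1.1 + e.2.1.2.1 + e.2.1.2.2) πG (n + 1) = 3 := by
      rw [ELc, Finset.sum_range_succ']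
      show (∑ i ∈ Finset.range n,
          ((πR i).2.1.1 + (πR i).2.1.2 + (-(πR i).2.1.1 - (πR i).2.1.2))) +
        (x₀ + 1 + (y₀ + 1) + (-x₀ - y₀ + 1)) = 3
      have h0 : (∑ i ∈ Finset.range n,
          ((πR i).2.1.1 + (πR i).2.1.2 + (-(πR i).2.1.1 - (πR i).2.1.2))) = 0 :=
        Finset.sum_eq_zero fun i _ => by ring
      rw [h0]
      ring
    have c1 : ELc (fun e => e.2.1.1) πG' (n + 2) = X := by
      rw [show n + 2 = (n + 1) + 1 from rfl, elc_succ,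
        elc_congr (w := fun e => e.2.1.1) (π := πG') (π' := πG) (fun i hi => hag i (by omega)),
        base1, hstep]
      show X + 1 + (-1) = X
      ring
    have c2 : ELc (fun e => e.2.1.2.1) πG' (n + 2) = Y := by
      rw [show n + 2 = (n + 1) + 1 from rfl, elc_succ,
        elc_congr (w := fun e => e.2.1.2.1) (π := πG') (π' := πG) (fun i hi => hag i (by omega)),
        base2, hstep]
      show Y + 1 + (-1) = Y
      ring
    have cs : ELc (fun e => e.2.1.1 + e.2.1.2.1 + e.2.1.2.2) πG' (n + 2) = 0 := by
      rw [show n + 2 = (n + 1) + 1 from rfl, elc_succ,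
        elc_congr (w := fun e => e.2.1.1 + e.2.1.2.1 + e.2.1.2.2) (π := πG') (π' := πG)
          (fun i hi => hag i (by omega)),
        bases, hstep]
      show (3 : ℤ) + (-1 + -1 + -1) = 0
      ring
    have c3 : ELc (fun e => e.2.1.2.2) πG' (n + 2) = -X - Y := by
      have := elc_add3 πG' (n + 2)
      omega
    have hev : ∀ (w : VEdge GS (ℤ × ℤ × ℤ) → ℤ), w loopE = 0 →
        ∀ m ≥ n + 2, ELc w πG' m = ELc w πG' (n + 2) := by
      intro w hw
      exact elc_eventually_const (fun k hk => by rw [hloopk k hk, hw])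
    have hXle : (X : ℚ) ≤ 0 := by
      refine le_zero_of_eventually_const (fun i => ((ELc (fun e => e.2.1.1) πG' (i + 1) : ℤ) : ℚ))
        (n + 1) (X : ℚ) (fun i hi => by
          show ((ELc (fun e => e.2.1.1) πG' (i + 1) : ℤ) : ℚ) = _
          rw [hev (fun e => e.2.1.1) rfl (i + 1) (by omega), c1]) L1
    have hYle : (Y : ℚ) ≤ 0 := by
      refine le_zero_of_eventually_const (fun i => ((ELc (fun e => e.2.1.2.1) πG' (i + 1) : ℤ) : ℚ))
        (n + 1) (Y : ℚ) (fun i hi => by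
          show ((ELc (fun e => e.2.1.2.1) πG' (i + 1) : ℤ) : ℚ) = _
          rw [hev (fun e => e.2.1.2.1) rfl (i + 1) (by omega), c2]) L2
    have hZle : ((-X - Y : ℤ) : ℚ) ≤ 0 := by
      refine le_zero_of_eventually_const (fun i => ((ELc (fun e => e.2.1.2.2) πG' (i + 1) : ℤ) : ℚ))
        (n + 1) ((-X - Y : ℤ) : ℚ) (fun i hi => by
          show ((ELc (fun e => e.2.1.2.2) πG' (i + 1) : ℤ) : ℚ) = _
          rw [hev (fun e => e.2.1.2.2) rfl (i + 1) (by omega), c3]) L3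
    have hX0 : X = 0 ∧ Y = 0 := by
      have h1 : X ≤ 0 := by exact_mod_cast hXle
      have h2 : Y ≤ 0 := by exact_mod_cast hYle
      have h3 : -X - Y ≤ 0 := by exact_mod_cast hZle
      omega
    refine ⟨n, by rw [stAt_eq]; exact hq0, hX0.1, hX0.2⟩
  · -- the strategy never stops: contradiction with the average-energy objective
    exfalso
    push_neg at H
    have houtG : IsOutcome (GE T x₀ y₀) {GS.qinit, GS.q0, GS.qstop} GS.qinit σG πG := by
      refine ⟨hplayG, ?_⟩
      intro k hmem
      cases k with
      | zero =>
        rw [pref_zero, hσG0]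
        rfl
      | succ m =>
        have hq0m : EndSt RQ.q0 (Pref πR m) = RQ.q0 := emb_mem_S0G (hendG m ▸ hmem)
        exact hstepG m hq0m (H m hq0m)
    obtain ⟨L1, L2, L3⟩ := hwin πG houtG
    obtain ⟨N₁, h1⟩ := L1 (1/2) (by norm_num)
    obtain ⟨N₂, h2⟩ := L2 (1/2) (by norm_num)
    obtain ⟨N₃, h3⟩ := L3 (1/2) (by norm_num)
    set n : ℕ := N₁ + N₂ + N₃ + 1 with hn
    have hEs : ∀ m, ELc (fun e => e.2.1.1 + e.2.1.2.1 + e.2.1.2.2) πG (m + 1) = 3 := by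
      intro m
      induction m with
      | zero =>
        rw [elc_succ]
        show (0 : ℤ) + (x₀ + 1 + (y₀ + 1) + (-x₀ - y₀ + 1)) = 3
        ring
      | succ k ih =>
        rw [elc_succ, ih]
        show (3 : ℤ) + ((πR k).2.1.1 + (πR k).2.1.2 + (-(πR k).2.1.1 - (πR k).2.1.2)) = 3
        ring
    have key : AEc (fun e => e.2.1.1) πG n + AEc (fun e => e.2.1.2.1) πG n +
        AEc (fun e => e.2.1.2.2) πG n = 3 := by
      rw [AEc, AEc, AEc, ← add_div, ← add_div, ← Finset.sum_add_distrib,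
        ← Finset.sum_add_distrib]
      have hterm : ∀ i ∈ Finset.range n,
          ((ELc (fun e => e.2.1.1) πG (i + 1) : ℤ) : ℚ) +
            ((ELc (fun e => e.2.1.2.1) πG (i + 1) : ℤ) : ℚ) +
            ((ELc (fun e => e.2.1.2.2) πG (i + 1) : ℤ) : ℚ) = 3 := by
        intro i _
        have ha := elc_add3 πG (i + 1)
        have hb := hEs i
        have hc : ELc (fun e => e.2.1.1) πG (i + 1) + ELc (fun e => e.2.1.2.1) πG (i + 1) +
            ELc (fun e => e.2.1.2.2) πG (i + 1) = 3 := by omega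
        exact_mod_cast hc
      rw [Finset.sum_congr rfl hterm, Finset.sum_const, Finset.card_range, nsmul_eq_mul]
      have hnpos : (0 : ℚ) < n := by
        rw [hn]; push_cast; positivity
      field_simp
    have k1 := h1 n (by omega)
    have k2 := h2 n (by omega)
    have k3 := h3 n (by omega)
    simp only [zero_add] at k1 k2 k3
    have : (3 : ℚ) ≤ 3 / 2 := by
      calc (3 : ℚ) = _ := key.symm
      _ ≤ 1/2 + 1/2 + 1/2 := by exact add_le_add (add_le_add k1 k2) k3
      _ = 3/2 := by norm_num
    linarith


/-- Let `R = ({q₀}, {q₁}, T)` be a two-dimensional robot game with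
weights bounded by `V` and initial configuration `(q₀, (x₀, y₀))`, and let `G` be the
3-dimensional weighted game constructed from it. Then `P₀` has a winning strategy in `G`
from `q_init` for the average-energy objective `AE((0,0,0))` if, and only if, `P₀`
wins the robot game `R` from `(q₀, (x₀, y₀))`. -/
theorem statement13 (T : Set (VEdge RQ (ℤ × ℤ))) (V : ℕ)
    (hbound : ∀ e ∈ T, -(V : ℤ) ≤ e.2.1.1 ∧ e.2.1.1 ≤ (V : ℤ) ∧
      -(V : ℤ) ≤ e.2.1.2 ∧ e.2.1.2 ≤ (V : ℤ))
    (htotal : ∀ q : RQ, ∃ (v : ℤ × ℤ) (q' : RQ), (q, v, q') ∈ T)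
    (x₀ y₀ : ℤ) :
    GWin T x₀ y₀ ↔ RobotWin T x₀ y₀ := by
  exact ⟨fun hg => direction2 htotal hg, direction1⟩

end RobotReduction
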